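/- arXiv:1508.02280 — 4 statements merged into one kernel-verified Lean document; each statement's English description precedes it below -/
import Mathlib

section
/- There exist real constants C1, C2 such that for all real numbers a, c with a ≥ 1 and c ≥ a + 1 the following holds: let Q(a,c) = (cosh(a)·cosh(c) + 1)/(sinh(a)·sinh(c)), let b ≥ 0 be defined by cosh(b) = Q(a,c) (i.e. b = arcosh(Q(a,c))), and let d = arcosh(sinh(b)·sinh(c)). Then C1 + c − a ≤ d ≤ C2 + c − a. -/
/-- The inverse hyperbolic cosine, for `x ≥ 1`. -/
noncomputable def arcosh (x : ℝ) : ℝ := Real.log (x + Real.sqrt (x ^ 2 - 1))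

lemma sinh_arcosh {x : ℝ} (hx : 1 ≤ x) :
    Real.sinh (arcosh x) = Real.sqrt (x ^ 2 - 1) := by
  have h0 : (0:ℝ) ≤ x ^ 2 - 1 := by nlinarith
  set s := Real.sqrt (x ^ 2 - 1) with hs
  have hs0 : 0 ≤ s := Real.sqrt_nonneg _
  have hss : s ^ 2 = x ^ 2 - 1 := Real.sq_sqrt h0
  have ht : 0 < x + s := by linarith
  rw [arcosh, Real.sinh_log ht]
  have hinv : (x + s)⁻¹ = x - s :=
    inv_eq_of_mul_eq_one_right (by nlinarith)
  rw [hinv]; ring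


/-- Pentagon lemma (Lemma 8.1): there are constants `C1`, `C2` such that for all
`a ≥ 1` and `c ≥ a + 1`, with `cosh b = Q(a,c)` (the pentagon relation) and
`d = arcosh (sinh b * sinh c)`, one has `C1 + c - a ≤ d ≤ C2 + c - a`. -/
theorem pentagon_lemma :
    ∃ C1 C2 : ℝ, ∀ a c : ℝ, 1 ≤ a → a + 1 ≤ c →
      let Q := (Real.cosh a * Real.cosh c + 1) / (Real.sinh a * Real.sinh c)
      let b := arcosh Q
      let d := arcosh (Real.sinh b * Real.sinh c)
      C1 + c - a ≤ d ∧ d ≤ C2 + c - a := by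
  refine ⟨0, Real.log 16, ?_⟩
  intro a c ha hc Q b d
  have ha0 : 0 < a := by linarith
  have hc0 : 0 < c := by linarith
  have hsa : 0 < Real.sinh a := Real.sinh_pos_iff.mpr ha0
  have hsc : 0 < Real.sinh c := Real.sinh_pos_iff.mpr hc0
  have hca : 1 ≤ Real.cosh a := Real.one_le_cosh a
  have hcc : 1 ≤ Real.cosh c := Real.one_le_cosh c
  have hcsq_a := Real.cosh_sq a
  have hcsq_c := Real.cosh_sq c
  -- Q ≥ 1
  have hQ1 : 1 ≤ Q := by
    rw [le_div_iff₀ (by positivity)]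
    have := Real.one_le_cosh (a - c)
    rw [Real.cosh_sub] at this
    linarith
  -- R = sqrt(Q^2-1)
  set R := (Real.cosh a + Real.cosh c) / (Real.sinh a * Real.sinh c) with hR
  have hR0 : 0 ≤ R := by positivity
  have hQR : Q ^ 2 - 1 = R ^ 2 := by
    rw [hR]; show ((Real.cosh a * Real.cosh c + 1) / (Real.sinh a * Real.sinh c)) ^ 2 - 1 = _
    field_simp
    nlinarith [hcsq_a, hcsq_c]
  have hsinhb : Real.sinh b = R := by
    show Real.sinh (arcosh Q) = R
    rw [sinh_arcosh hQ1, hQR, Real.sqrt_sq hR0]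
  -- S := sinh b * sinh c
  have hS : Real.sinh b * Real.sinh c = (Real.cosh a + Real.cosh c) / Real.sinh a := by
    rw [hsinhb, hR]; field_simp
  set S := Real.sinh b * Real.sinh c with hSdef
  -- exponential bounds on S
  have hexp : Real.exp (c - a) ≤ S ∧ S ≤ 8 * Real.exp (c - a) := by
    rw [hS]
    have hea : Real.sinh a = (Real.exp a - Real.exp (-a)) / 2 := Real.sinh_eq a
    have heca : Real.cosh a = (Real.exp a + Real.exp (-a)) / 2 := Real.cosh_eq a
    have hecc : Real.cosh c = (Real.exp c + Real.exp (-c)) / 2 := Real.cosh_eq c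
    have h1 : Real.exp (c - a) * Real.exp a = Real.exp c := by
      rw [← Real.exp_add]; ring_nf
    have h2 : Real.exp (c - a) * Real.exp (-a) = Real.exp c * Real.exp (-a) * Real.exp (-a) := by
      rw [← Real.exp_add, ← Real.exp_add, ← Real.exp_add]; ring_nf
    have hma : Real.exp (-a) ≤ Real.exp (-1) := Real.exp_le_exp.mpr (by linarith)
    have hm1 : Real.exp (-1 : ℝ) ≤ 1/2 := by
      rw [Real.exp_neg]
      rw [inv_le_comm₀ (Real.exp_pos 1) (by norm_num)]
      calc (1/2 : ℝ)⁻¹ = 2 := by norm_num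
      _ ≤ Real.exp 1 := by linarith [Real.add_one_le_exp (1:ℝ)]
    have hpa : 0 < Real.exp (-a) := Real.exp_pos _
    have hpc : 0 < Real.exp c := Real.exp_pos _
    have hpma : 0 < Real.exp a := Real.exp_pos _
    have hmc : 0 < Real.exp (-c) := Real.exp_pos _
    have heac : Real.exp a ≤ Real.exp c := Real.exp_le_exp.mpr (by linarith)
    have hmc2 : Real.exp (-c) ≤ Real.exp c := Real.exp_le_exp.mpr (by linarith)
    constructor
    · rw [le_div_iff₀ hsa]
      -- exp(c-a) * sinh a ≤ cosh a + cosh c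
      rw [hea, heca, hecc]
      have heq : Real.exp (c - a) * ((Real.exp a - Real.exp (-a)) / 2)
          = (Real.exp c - Real.exp c * Real.exp (-a) * Real.exp (-a)) / 2 := by
        linear_combination (h1 - h2) / 2
      rw [heq]
      have hprod : 0 < Real.exp c * Real.exp (-a) * Real.exp (-a) :=
        mul_pos (mul_pos hpc hpa) hpa
      linarith
    · rw [div_le_iff₀ hsa, hea, heca, hecc]
      have h3 : 8 * Real.exp (c - a) * ((Real.exp a - Real.exp (-a)) / 2)
          = 4 * (Real.exp c - Real.exp c * Real.exp (-a) * Real.exp (-a)) := by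
        linear_combination 4 * h1 - 4 * h2
      rw [h3]
      -- cosh a + cosh c ≤ e^a + e^c ≤ 2 e^c ≤ 4 e^c - 4 e^c e^{-a} e^{-a}
      have h4 : Real.exp (-a) ≤ 1/2 := hma.trans hm1
      have hsmall : Real.exp c * Real.exp (-a) * Real.exp (-a) ≤ Real.exp c * (1/2) * (1/2) := by
        gcongr
      have h1c : (1:ℝ) ≤ Real.exp c := by
        rw [← Real.exp_zero]; exact Real.exp_le_exp.mpr (le_of_lt hc0)
      linarith
  obtain ⟨hSl, hSu⟩ := hexp
  have h1e : (1:ℝ) ≤ Real.exp (c - a) := by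
    rw [← Real.exp_zero]; exact Real.exp_le_exp.mpr (by linarith)
  have hS1 : 1 ≤ S := le_trans h1e hSl
  have hSsq : (0:ℝ) ≤ S ^ 2 - 1 := by nlinarith
  have hsqS : Real.sqrt (S ^ 2 - 1) ≤ S := by
    calc Real.sqrt (S ^ 2 - 1) ≤ Real.sqrt (S ^ 2) := Real.sqrt_le_sqrt (by linarith)
    _ = S := Real.sqrt_sq (by linarith)
  have hsq0 : 0 ≤ Real.sqrt (S ^ 2 - 1) := Real.sqrt_nonneg _
  constructor
  · -- lower bound
    show 0 + c - a ≤ arcosh S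
    rw [arcosh]
    have : Real.exp (c - a) ≤ S + Real.sqrt (S ^ 2 - 1) := by linarith
    calc 0 + c - a = Real.log (Real.exp (c - a)) := by rw [Real.log_exp]; ring
    _ ≤ Real.log (S + Real.sqrt (S ^ 2 - 1)) :=
        Real.log_le_log (Real.exp_pos _) this
  · show arcosh S ≤ Real.log 16 + c - a
    rw [arcosh]
    have hle : S + Real.sqrt (S ^ 2 - 1) ≤ 16 * Real.exp (c - a) := by linarith
    calc Real.log (S + Real.sqrt (S ^ 2 - 1)) ≤ Real.log (16 * Real.exp (c - a)) :=
        Real.log_le_log (by linarith) hle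
    _ = Real.log 16 + c - a := by
        rw [Real.log_mul (by norm_num) (Real.exp_ne_zero _), Real.log_exp]; ring
end

section
/- There exists a constant C > 0 such that for all real numbers a, c with a ≥ 1 and c > a, the quantity Q(a,c) = (cosh(a)·cosh(c) + 1)/(sinh(a)·sinh(c)) satisfies 1 + e^{−2a} ≤ Q(a,c) ≤ 1 + C·e^{−2a}. -/
/-- Intermediate estimate in the proof of the pentagon lemma (Lemma 8.1):
`1 + e^{-2a} ≤ Q(a,c) ≤ 1 + C e^{-2a}`. -/
theorem pentagon_cosh_estimate :
    ∃ C : ℝ, 0 < C ∧ ∀ a c : ℝ, 1 ≤ a → a < c →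
      let Q := (Real.cosh a * Real.cosh c + 1) / (Real.sinh a * Real.sinh c)
      1 + Real.exp (-2 * a) ≤ Q ∧ Q ≤ 1 + C * Real.exp (-2 * a) := by
  refine ⟨32, by norm_num, fun a c ha hac => ?_⟩
  intro Q
  have ha0 : 0 < a := lt_of_lt_of_le one_pos ha
  have hsa : 0 < Real.sinh a := Real.sinh_pos_iff.2 ha0
  have hsc : 0 < Real.sinh c := Real.sinh_pos_iff.2 (ha0.trans hac)
  have hS : 0 < Real.sinh a * Real.sinh c := mul_pos hsa hsc
  set u := Real.exp a with hu
  set v := Real.exp c with hv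
  set p := Real.exp (-a) with hp
  set q := Real.exp (-c) with hq
  have hp0 : 0 < p := Real.exp_pos _
  have hq0 : 0 < q := Real.exp_pos _
  have hup : u * p = 1 := by rw [hu, hp, ← Real.exp_add]; simp
  have hvq : v * q = 1 := by rw [hv, hq, ← Real.exp_add]; simp
  have hu2 : 2 ≤ u := by
    have : Real.exp 1 ≤ u := Real.exp_le_exp.2 ha
    have h1 : (2:ℝ) < Real.exp 1 := by
      have := Real.exp_one_gt_d9; linarith
    linarith
  have huv : u < v := Real.exp_lt_exp.2 hac
  have hqp : q < p := Real.exp_lt_exp.2 (by linarith)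
  have he2 : Real.exp (-2 * a) = p ^ 2 := by
    rw [← Real.exp_nat_mul]
    norm_num
  have hca : Real.cosh a = (u + p) / 2 := by rw [Real.cosh_eq, hu, hp]
  have hcc : Real.cosh c = (v + q) / 2 := by rw [Real.cosh_eq, hv, hq]
  have hsa' : Real.sinh a = (u - p) / 2 := by rw [Real.sinh_eq, hu, hp]
  have hsc' : Real.sinh c = (v - q) / 2 := by rw [Real.sinh_eq, hv, hq]
  clear_value u v p q
  have hpu : p ≤ 1/2 := by nlinarith
  have hpv : 1 ≤ p * v := by nlinarith
  have hqu : q * u ≤ 1 := by nlinarith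
  constructor
  · rw [show Q = (Real.cosh a * Real.cosh c + 1) / (Real.sinh a * Real.sinh c) from rfl,
      le_div_iff₀ hS, he2, hca, hcc, hsa', hsc']
    have hkey0 : p^2*(u-p)*(v-q) = p*(1-p^2)*(v-q) := by
      linear_combination (v-q)*p*hup
    have hvpos : (0:ℝ) < v := by linarith
    have h4 : (1-p^2)*(v-q) ≤ v := by
      nlinarith [mul_nonneg (sq_nonneg p) (by linarith : (0:ℝ) ≤ v - q)]
    have h5 : p*((1-p^2)*(v-q)) ≤ p*v := mul_le_mul_of_nonneg_left h4 hp0.le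
    linarith [hkey0, h5, mul_pos hq0 (by linarith : (0:ℝ) < u), mul_pos hp0 hvpos]
  · rw [show Q = (Real.cosh a * Real.cosh c + 1) / (Real.sinh a * Real.sinh c) from rfl,
      div_le_iff₀ hS, he2, hca, hcc, hsa', hsc']
    have hq12 : q ≤ 1/2 := by linarith
    have hqv : q ≤ v/4 := by linarith
    have hkey : p^2*(u-p)*(v-q) = p*(1-p^2)*(v-q) := by
      linear_combination (v-q)*p*hup
    have hA : (3/4 : ℝ) ≤ 1 - p^2 := by nlinarith
    have hB : (3/4)*v ≤ v - q := by linarith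
    have h1 : (3/4)*((3/4)*v) ≤ (1-p^2)*(v-q) := by
      calc (3/4 : ℝ)*((3/4)*v) ≤ (3/4)*(v-q) := by linarith
        _ ≤ (1-p^2)*(v-q) := mul_le_mul_of_nonneg_right hA (by linarith)
    have h3 : p*((3/4)*((3/4)*v)) ≤ p*((1-p^2)*(v-q)) :=
      mul_le_mul_of_nonneg_left h1 hp0.le
    linarith [hkey, h3, hqu, hpv]
end

section
/- There exists a constant C′ > 0 such that for all real numbers a, c with a ≥ 1 and c > a, setting Q(a,c) = (cosh(a)·cosh(c) + 1)/(sinh(a)·sinh(c)), one has √2·e^{−a} ≤ √(Q(a,c)² − 1) ≤ C′·e^{−a}. -/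
/-- Intermediate estimate in the proof of the pentagon lemma (Lemma 8.1):
`√2 e^{-a} ≤ sinh b = √(Q(a,c)² - 1) ≤ C' e^{-a}`. -/
theorem pentagon_sinh_estimate :
    ∃ C' : ℝ, 0 < C' ∧ ∀ a c : ℝ, 1 ≤ a → a < c →
      let Q := (Real.cosh a * Real.cosh c + 1) / (Real.sinh a * Real.sinh c)
      Real.sqrt 2 * Real.exp (-a) ≤ Real.sqrt (Q ^ 2 - 1) ∧
        Real.sqrt (Q ^ 2 - 1) ≤ C' * Real.exp (-a) := by
  refine ⟨18, by norm_num, fun a c ha hac => ?_⟩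
  intro Q
  have ha0 : 0 < a := lt_of_lt_of_le one_pos ha
  have hc0 : 0 < c := ha0.trans hac
  have hsa : 0 < Real.sinh a := Real.sinh_pos_iff.2 ha0
  have hsc : 0 < Real.sinh c := Real.sinh_pos_iff.2 hc0
  have hca : 0 < Real.cosh a := Real.cosh_pos _
  have hcc : 0 < Real.cosh c := Real.cosh_pos _
  have hS : Real.sqrt (Q ^ 2 - 1)
      = (Real.cosh a + Real.cosh c) / (Real.sinh a * Real.sinh c) := by
    have h1 : Q ^ 2 - 1
        = ((Real.cosh a + Real.cosh c) / (Real.sinh a * Real.sinh c)) ^ 2 := by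
      show ((Real.cosh a * Real.cosh c + 1) / (Real.sinh a * Real.sinh c)) ^ 2 - 1 = _
      rw [div_pow, div_pow, sub_eq_iff_eq_add]
      field_simp
      nlinarith [Real.cosh_sq a, Real.cosh_sq c]
    rw [h1, Real.sqrt_sq (by positivity)]
  rw [hS]
  have hexp : Real.exp (-a) * Real.exp a = 1 := by
    rw [← Real.exp_add]; simp
  have hsinh_a : Real.sinh a ≤ Real.exp a / 2 := by
    rw [Real.sinh_eq]; nlinarith [Real.exp_pos (-a)]
  have hsccosh : Real.sinh c ≤ Real.cosh c := by
    nlinarith [Real.cosh_sub_sinh c, Real.exp_pos (-c)]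
  have hsqrt2 : Real.sqrt 2 ≤ 2 := by
    nlinarith [Real.sq_sqrt (show (0:ℝ) ≤ 2 by norm_num), Real.sqrt_nonneg 2]
  constructor
  · rw [le_div_iff₀ (by positivity)]
    have hprod : Real.sinh a * Real.sinh c ≤ Real.exp a / 2 * Real.cosh c :=
      mul_le_mul hsinh_a hsccosh hsc.le (by positivity)
    have h2 : Real.sqrt 2 * Real.exp (-a) * (Real.sinh a * Real.sinh c)
        ≤ 2 * Real.exp (-a) * (Real.exp a / 2 * Real.cosh c) := by
      apply mul_le_mul _ hprod (by positivity) (by positivity)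
      have := Real.exp_pos (-a)
      nlinarith
    have h3 : 2 * Real.exp (-a) * (Real.exp a / 2 * Real.cosh c) = Real.cosh c := by
      field_simp
      nlinarith [hexp]
    linarith
  · rw [div_le_iff₀ (by positivity)]
    -- sinh a ≥ exp a / 3 for a ≥ 1
    have key : ∀ x : ℝ, 1 ≤ x → Real.exp x / 3 ≤ Real.sinh x := by
      intro x hx
      have h3 : (3:ℝ) ≤ Real.exp (2 * x) := by
        have := Real.add_one_le_exp (2 * x)
        linarith
      have hx1 : Real.exp (-x) * Real.exp (2 * x) = Real.exp x := by
        rw [← Real.exp_add]; ring_nf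
      have hxle : Real.exp (-x) ≤ Real.exp x / 3 := by
        nlinarith [Real.exp_pos (-x)]
      rw [Real.sinh_eq]; linarith
    have hpa := key a ha
    have hpc := key c (le_of_lt (lt_of_le_of_lt ha hac))
    have hcoshA : Real.cosh a ≤ Real.exp a := by
      rw [Real.cosh_eq]
      nlinarith [Real.exp_pos (-a), Real.exp_pos a, hexp,
        Real.exp_le_exp.2 (neg_le_self ha0.le)]
    have hcoshC : Real.cosh c ≤ Real.exp c := by
      rw [Real.cosh_eq]
      nlinarith [Real.exp_pos (-c), Real.exp_pos c,
        Real.exp_le_exp.2 (neg_le_self hc0.le)]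
    have hac' : Real.exp a ≤ Real.exp c := Real.exp_le_exp.2 hac.le
    have hprod2 : Real.exp a / 3 * (Real.exp c / 3) ≤ Real.sinh a * Real.sinh c :=
      mul_le_mul hpa hpc (by positivity) hsa.le
    have hkey2 : Real.exp c / 9 ≤ Real.exp (-a) * (Real.sinh a * Real.sinh c) := by
      have h0 : Real.exp c / 9 = Real.exp (-a) * (Real.exp a / 3 * (Real.exp c / 3)) := by
        rw [show Real.exp (-a) * (Real.exp a / 3 * (Real.exp c / 3))
            = Real.exp (-a) * Real.exp a * Real.exp c / 9 by ring, hexp]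
        ring
      rw [h0]
      exact mul_le_mul_of_nonneg_left hprod2 (Real.exp_pos _).le
    nlinarith [hkey2]
end

section
/- There exists a constant C″ > 0 such that for all real numbers a, c with a ≥ 1 and c ≥ a + 1, setting Q(a,c) = (cosh(a)·cosh(c) + 1)/(sinh(a)·sinh(c)), one has (√2/4)·e^{c−a} ≤ √(Q(a,c)² − 1)·sinh(c) ≤ C″·e^{c−a}. -/
/-- Intermediate estimate in the proof of the pentagon lemma (Lemma 8.1):
`(√2/4) e^{c-a} ≤ √(Q(a,c)² - 1) · sinh c ≤ C'' e^{c-a}`. -/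
theorem pentagon_coshd_estimate :
    ∃ C'' : ℝ, 0 < C'' ∧ ∀ a c : ℝ, 1 ≤ a → a + 1 ≤ c →
      let Q := (Real.cosh a * Real.cosh c + 1) / (Real.sinh a * Real.sinh c)
      Real.sqrt 2 / 4 * Real.exp (c - a) ≤ Real.sqrt (Q ^ 2 - 1) * Real.sinh c ∧
        Real.sqrt (Q ^ 2 - 1) * Real.sinh c ≤ C'' * Real.exp (c - a) := by
  refine ⟨10, by norm_num, ?_⟩
  intro a c ha hc Q
  have hQ : Q = (Real.cosh a * Real.cosh c + 1) / (Real.sinh a * Real.sinh c) := rfl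
  have ha0 : (0:ℝ) < a := by linarith
  have hc0 : (0:ℝ) < c := by linarith
  have hsa : 0 < Real.sinh a := by rwa [Real.sinh_pos_iff]
  have hsc : 0 < Real.sinh c := by rwa [Real.sinh_pos_iff]
  have hca : 0 < Real.cosh a := Real.cosh_pos a
  have hcc : 0 < Real.cosh c := Real.cosh_pos c
  have h1 : Q ^ 2 - 1 =
      ((Real.cosh a + Real.cosh c) / (Real.sinh a * Real.sinh c)) ^ 2 := by
    rw [hQ]
    field_simp
    nlinarith [Real.cosh_sq a, Real.cosh_sq c]
  have key : Real.sqrt (Q ^ 2 - 1) * Real.sinh c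
      = (Real.cosh a + Real.cosh c) / Real.sinh a := by
    rw [h1, Real.sqrt_sq (by positivity)]
    field_simp
  rw [key]
  have hEa : Real.sinh a = (Real.exp a - Real.exp (-a)) / 2 := Real.sinh_eq a
  have hCa : Real.cosh a = (Real.exp a + Real.exp (-a)) / 2 := Real.cosh_eq a
  have hCc : Real.cosh c = (Real.exp c + Real.exp (-c)) / 2 := Real.cosh_eq c
  have hsub : Real.exp (c - a) = Real.exp c / Real.exp a := Real.exp_sub c a
  have hEpa : 0 < Real.exp a := Real.exp_pos a
  have hEpc : 0 < Real.exp c := Real.exp_pos c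
  have hmul : Real.exp (-a) * Real.exp a = 1 := by
    rw [← Real.exp_add]; simp
  have hEa1 : 1 ≤ Real.exp a := by
    have := Real.add_one_le_exp a; linarith
  have hEc1 : 1 ≤ Real.exp c := by
    have := Real.add_one_le_exp c; linarith
  have hEac : Real.exp a ≤ Real.exp c := Real.exp_le_exp.mpr (by linarith)
  have hEna : Real.exp (-a) ≤ 1/2 := by
    have h1 : Real.exp (-a) ≤ Real.exp (-1) := Real.exp_le_exp.mpr (by linarith)
    have h2 : Real.exp (-1) ≤ 1/2 := by
      rw [Real.exp_neg]
      rw [inv_le_comm₀ (Real.exp_pos 1) (by norm_num)]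
      have := Real.add_one_le_exp 1
      linarith
    linarith
  have hEnc : Real.exp (-c) ≤ 1 := Real.exp_le_one_iff.mpr (by linarith)
  have hEnap : 0 < Real.exp (-a) := Real.exp_pos _
  have hEncp : 0 < Real.exp (-c) := Real.exp_pos _
  have hs2 : Real.sqrt 2 ≤ 2 := by
    nlinarith [Real.sq_sqrt (by norm_num : (0:ℝ) ≤ 2), Real.sqrt_nonneg 2]
  have hs2p : 0 ≤ Real.sqrt 2 := Real.sqrt_nonneg 2
  have hdiv : Real.exp c / Real.exp a = Real.exp c * Real.exp (-a) := by
    rw [Real.exp_neg]; ring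
  have hmulc : Real.exp c * (Real.exp (-a) * Real.exp a) = Real.exp c := by
    rw [hmul]; ring
  have hsqa : Real.exp (-a) * Real.exp (-a) ≤ 1/4 :=
    mul_le_mul hEna hEna hEnap.le (by norm_num) |>.trans (by norm_num)
  constructor
  · rw [le_div_iff₀ hsa, hsub, hEa, hCa, hCc, hdiv]
    nlinarith [mul_nonneg (mul_nonneg hs2p hEpc.le) (mul_self_nonneg (Real.exp (-a))),
      mul_le_mul_of_nonneg_right hs2 hEpc.le]
  · rw [div_le_iff₀ hsa, hsub, hEa, hCa, hCc, hdiv]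
    have hrhs : 10 * (Real.exp c * Real.exp (-a)) * ((Real.exp a - Real.exp (-a)) / 2)
        = 5 * Real.exp c - 5 * (Real.exp c * (Real.exp (-a) * Real.exp (-a))) := by
      linear_combination (5 * Real.exp c) * hmul
    rw [hrhs]
    have hX : Real.exp c * (Real.exp (-a) * Real.exp (-a)) ≤ Real.exp c * (1/4) :=
      mul_le_mul_of_nonneg_left hsqa hEpc.le
    linarith
end
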